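/- Let d ≥ 1, let f : ℝ^d → ℝ be differentiable and L-gradient Lipschitz with L > 0, and suppose f(x) ≥ f⋆ for all x ∈ ℝ^d. Fix x₀ ∈ ℝ^d, ρ > 0, and an integer K ≥ 1. Run the S2P iterates with the dynamic step size α_k = |f(X_k + ρ s_k) − f(X_k − ρ s_k)|/(2ρLd). Then there exists an index j with 0 ≤ j ≤ K such that E[‖∇f(X_j)‖²] ≤ 4Ld(f(x₀) − f⋆)/K + L²d²ρ²/2. -/

import Mathlib

/-- The vector in `ℝ^d` with `+1` in coordinates where `e` is `true`
and `-1` where `e` is `false`; a Rademacher random vector is uniform over these. -/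
noncomputable def signVec {d : ℕ} (e : Fin d → Bool) : EuclideanSpace ℝ (Fin d) :=
  WithLp.toLp 2 (fun i => if e i then (1 : ℝ) else -1)

/-- The S2P iterates with the dynamic step size
`α_k = |f(X_k + ρ s_k) − f(X_k − ρ s_k)|/(2ρLd)`:
`X_0 = x0` and `X_{k+1} = X_k + α_k s_k` if
`f(X_k + α_k s_k) ≤ f(X_k − α_k s_k)`, else `X_{k+1} = X_k − α_k s_k`. -/
noncomputable def s2pDyn {d : ℕ} (f : EuclideanSpace ℝ (Fin d) → ℝ)
    (x0 : EuclideanSpace ℝ (Fin d)) (ρ L : ℝ) (s : ℕ → EuclideanSpace ℝ (Fin d)) :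
    ℕ → EuclideanSpace ℝ (Fin d)
  | 0 => x0
  | k + 1 =>
      let x := s2pDyn f x0 ρ L s k
      let α := |f (x + ρ • s k) - f (x - ρ • s k)| / (2 * ρ * L * d)
      if f (x + α • s k) ≤ f (x - α • s k) then x + α • s k else x - α • s k

open scoped RealInnerProductSpace

section Helpers

variable {E : Type*} [NormedAddCommGroup E] [InnerProductSpace ℝ E] [CompleteSpace E]

lemma inner_gradient_eq {f : E → ℝ} (x v : E) :
    ⟪gradient f x, v⟫ = fderiv ℝ f x v := by
  rw [gradient]
  rw [← InnerProductSpace.toDual_apply_apply, LinearIsometryEquiv.apply_symm_apply]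

lemma curve_hasDerivAt {f : E → ℝ} (hdiff : Differentiable ℝ f) (x v : E) (t : ℝ) :
    HasDerivAt (fun t : ℝ => f (x + t • v)) ⟪gradient f (x + t • v), v⟫ t := by
  have h1 : HasDerivAt (fun t : ℝ => x + t • v) v t := by
    simpa using ((hasDerivAt_id t).smul_const v).const_add x
  have h2 := (hdiff (x + t • v)).hasFDerivAt.comp_hasDerivAt t h1
  rw [inner_gradient_eq]
  exact h2

lemma quadUB {f : E → ℝ} {L : ℝ} (hdiff : Differentiable ℝ f)
    (hlip : ∀ x y : E, ‖gradient f x - gradient f y‖ ≤ L * ‖x - y‖) (x v : E) :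
    |f (x + v) - f x - ⟪gradient f x, v⟫| ≤ L / 2 * ‖v‖ ^ 2 := by
  have key : ∀ (c : ℝ), (c = 1 ∨ c = -1) →
      c * (f (x + v) - f x - ⟪gradient f x, v⟫) ≤ L / 2 * ‖v‖ ^ 2 := by
    intro c hc
    set g : ℝ → ℝ := fun t => c * (f (x + t • v) - t * ⟪gradient f x, v⟫) - L / 2 * t ^ 2 * ‖v‖ ^ 2 with hg
    have hder : ∀ t : ℝ, HasDerivAt g
        (c * (⟪gradient f (x + t • v), v⟫ - ⟪gradient f x, v⟫) - L * t * ‖v‖ ^ 2) t := by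
      intro t
      have h1 := curve_hasDerivAt hdiff x v t
      have h2 : HasDerivAt (fun t : ℝ => f (x + t • v) - t * ⟪gradient f x, v⟫)
          (⟪gradient f (x + t • v), v⟫ - ⟪gradient f x, v⟫) t :=
by
        have := h1.sub ((hasDerivAt_id t).mul_const ⟪gradient f x, v⟫)
        simp only [id, one_mul] at this
        exact this
      have h3 : HasDerivAt (fun t : ℝ => L / 2 * t ^ 2 * ‖v‖ ^ 2)
          (L * t * ‖v‖ ^ 2) t := by
        have := ((hasDerivAt_pow 2 t).const_mul (L / 2)).mul_const (‖v‖ ^ 2)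
        simp only [Nat.cast_ofNat, Nat.add_one_sub_one, pow_one] at this
        refine this.congr_deriv ?_
        ring
      exact (h2.const_mul c).sub h3
    have hanti : AntitoneOn g (Set.Icc (0:ℝ) 1) := by
      apply antitoneOn_of_deriv_nonpos (convex_Icc 0 1)
      · exact fun t _ => (hder t).continuousAt.continuousWithinAt
      · exact fun t _ => ((hder t).differentiableAt).differentiableWithinAt
      · intro t ht
        rw [interior_Icc] at ht
        rw [(hder t).deriv]
        have hinner : c * (⟪gradient f (x + t • v), v⟫ - ⟪gradient f x, v⟫) ≤ L * t * ‖v‖ ^ 2 := by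
          have h1 : ⟪gradient f (x + t • v) - gradient f x, v⟫
              ≤ ‖gradient f (x + t • v) - gradient f x‖ * ‖v‖ := real_inner_le_norm _ _
          have h1' : -(‖gradient f (x + t • v) - gradient f x‖ * ‖v‖)
              ≤ ⟪gradient f (x + t • v) - gradient f x, v⟫ := by
            have := real_inner_le_norm (gradient f x - gradient f (x + t • v)) v
            rw [inner_sub_left] at this h1 ⊢
            have := abs_real_inner_le_norm (gradient f (x + t • v) - gradient f x) v
            rw [inner_sub_left] at this
            nlinarith [abs_le.1 this]
          have h2 : ‖gradient f (x + t • v) - gradient f x‖ ≤ L * (t * ‖v‖) := by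
            have := hlip (x + t • v) x
            simpa [norm_smul, abs_of_pos ht.1, mul_assoc] using this
          have hv : (0:ℝ) ≤ ‖v‖ := norm_nonneg v
          rw [inner_sub_left] at h1 h1'
          rcases hc with h | h <;> subst h <;> nlinarith
        linarith
    have h01 := hanti (Set.left_mem_Icc.2 zero_le_one) (Set.right_mem_Icc.2 zero_le_one) zero_le_one
    simp only [hg] at h01
    norm_num at h01
    rw [inner_gradient_eq]
    nlinarith [h01]
  have h1 := key 1 (Or.inl rfl)
  have h2 := key (-1) (Or.inr rfl)
  rw [abs_le]; constructor <;> nlinarith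

lemma step_bound {f : E → ℝ} {L : ℝ} (hL : 0 < L) (hdiff : Differentiable ℝ f)
    (hlip : ∀ x y : E, ‖gradient f x - gradient f y‖ ≤ L * ‖x - y‖)
    {d : ℕ} (hd : 1 ≤ d) {ρ : ℝ} (hρ : 0 < ρ) (x s : E) (hs : ‖s‖ ^ 2 = d) :
    (if f (x + (|f (x + ρ • s) - f (x - ρ • s)| / (2 * ρ * L * d)) • s)
          ≤ f (x - (|f (x + ρ • s) - f (x - ρ • s)| / (2 * ρ * L * d)) • s)
      then f (x + (|f (x + ρ • s) - f (x - ρ • s)| / (2 * ρ * L * d)) • s)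
      else f (x - (|f (x + ρ • s) - f (x - ρ • s)| / (2 * ρ * L * d)) • s))
      ≤ f x - ⟪gradient f x, s⟫ ^ 2 / (2 * L * d) + L * d * ρ ^ 2 / 8 := by
  have hdpos : (0:ℝ) < d := by exact_mod_cast Nat.lt_of_lt_of_le Nat.zero_lt_one hd
  set D : ℝ := L * d with hD
  have hDpos : 0 < D := mul_pos hL hdpos
  set g : ℝ := ⟪gradient f x, s⟫ with hgdef
  set α : ℝ := |f (x + ρ • s) - f (x - ρ • s)| / (2 * ρ * L * d) with hα
  have hαnn : 0 ≤ α := by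
    apply div_nonneg (abs_nonneg _)
    positivity
  -- quadratic bounds at an arbitrary scalar multiple
  have hquad : ∀ t : ℝ, |f (x + t • s) - f x - t * g| ≤ L / 2 * t ^ 2 * d := by
    intro t
    have h := quadUB hdiff hlip x (t • s)
    rw [real_inner_smul_right] at h
    rw [norm_smul] at h
    calc |f (x + t • s) - f x - t * g| ≤ L / 2 * (|t| * ‖s‖) ^ 2 := by
          simpa [hgdef, real_inner_smul_right] using h
      _ = L / 2 * t ^ 2 * d := by rw [mul_pow, sq_abs, hs]; ring
  have hquadneg : ∀ t : ℝ, |f (x - t • s) - f x + t * g| ≤ L / 2 * t ^ 2 * d := by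
    intro t
    have h0 := hquad (-t)
    rw [neg_smul, ← sub_eq_add_neg] at h0
    calc |f (x - t • s) - f x + t * g| = |f (x - t • s) - f x - (-t) * g| := by ring_nf
      _ ≤ L / 2 * (-t) ^ 2 * ↑d := h0
      _ = L / 2 * t ^ 2 * ↑d := by ring
  -- |α - |g|/D| ≤ ρ/2
  have hΔ : |(f (x + ρ • s) - f (x - ρ • s)) - 2 * ρ * g| ≤ L * ρ ^ 2 * d := by
    have h1 := hquad ρ
    have h2 := hquadneg ρ
    have heq : f (x + ρ • s) - f (x - ρ • s) - 2 * ρ * g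
        = (f (x + ρ • s) - f x - ρ * g) - (f (x - ρ • s) - f x + ρ * g) := by ring
    rw [heq]
    exact le_trans (abs_sub _ _) (by linarith)
  have hαclose : |α - |g| / D| ≤ ρ / 2 := by
    have habs : |(|f (x + ρ • s) - f (x - ρ • s)| - |2 * ρ * g|)| ≤ L * ρ ^ 2 * d :=
      le_trans (abs_abs_sub_abs_le_abs_sub _ _) hΔ
    have h2ρg : |2 * ρ * g| = 2 * ρ * |g| := by
      rw [abs_mul, abs_of_pos (by linarith : (0:ℝ) < 2 * ρ)]
    rw [h2ρg] at habs
    have hden : 2 * ρ * L * (d:ℝ) = 2 * ρ * D := by rw [hD]; ring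
    have : α - |g| / D = (|f (x + ρ • s) - f (x - ρ • s)| - 2 * ρ * |g|) / (2 * ρ * D) := by
      rw [hα, hden]
      field_simp
    rw [this, abs_div, abs_of_pos (by positivity : (0:ℝ) < 2 * ρ * D)]
    rw [div_le_iff₀ (by positivity)]
    calc |(|f (x + ρ • s) - f (x - ρ • s)| - 2 * ρ * |g|)| ≤ L * ρ ^ 2 * d := habs
      _ = ρ / 2 * (2 * ρ * D) := by rw [hD]; ring
  -- descent
  have hup : f (x + α • s) ≤ f x + α * g + L / 2 * α ^ 2 * d := by
    have := abs_le.1 (hquad α)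
    linarith [this.2]
  have hdn : f (x - α • s) ≤ f x - α * g + L / 2 * α ^ 2 * d := by
    have := abs_le.1 (hquadneg α)
    linarith [this.2]
  have hmin : (if f (x + α • s) ≤ f (x - α • s) then f (x + α • s) else f (x - α • s))
      ≤ f x - α * |g| + L / 2 * α ^ 2 * d := by
    rcases abs_cases g with ⟨hg, _⟩ | ⟨hg, _⟩
    · split
      · next h => calc (f (x + α • s)) ≤ f (x - α • s) := h
          _ ≤ f x - α * g + L / 2 * α ^2 * d := hdn
          _ = f x - α * |g| + L / 2 * α ^2 * d := by rw [hg]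
      · next h =>
          rw [hg]; exact hdn
    · split
      · next h => rw [hg]; calc f (x + α • s) ≤ f x + α * g + L/2 * α^2*d := hup
          _ = f x - α * -g + L/2*α^2*d := by ring
      · next h =>
          push_neg at h
          calc f (x - α • s) ≤ f (x + α • s) := le_of_lt h
            _ ≤ f x + α * g + L/2*α^2*d := hup
            _ = f x - α * |g| + L/2*α^2*d := by rw [hg]; ring
  refine le_trans hmin ?_
  -- algebra: -α|g| + D/2 α² ≤ -g²/(2D) + Dρ²/8
  have hsq : (α - |g| / D) ^ 2 ≤ (ρ / 2) ^ 2 :=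
    sq_le_sq' (abs_le.1 hαclose).1 (abs_le.1 hαclose).2
  have hDne : D ≠ 0 := ne_of_gt hDpos
  have hexp : D * (α - |g| / D) ^ 2 = D * α ^ 2 - 2 * α * |g| + |g| ^ 2 / D := by
    field_simp
    ring
  have hkey : D * α ^ 2 - 2 * α * |g| + |g| ^ 2 / D ≤ D * ρ ^ 2 / 4 := by
    rw [← hexp]
    nlinarith [hsq, hDpos]
  have hgb : g ^ 2 = |g| ^ 2 := (sq_abs g).symm
  have h2LD : g ^ 2 / (2 * L * ↑d) = (|g| ^ 2 / D) / 2 := by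
    rw [hgb, hD]; ring
  have hLa : L / 2 * α ^ 2 * ↑d = D * α ^ 2 / 2 := by rw [hD]; ring
  rw [h2LD, hLa]
  linarith

end Helpers

lemma signVec_sq {d : ℕ} (e : Fin d → Bool) (i : Fin d) :
    signVec e i * signVec e i = 1 := by
  unfold signVec; cases h : e i <;> simp [h]

lemma norm_signVec_sq {d : ℕ} (e : Fin d → Bool) : ‖signVec e‖ ^ 2 = d := by
  rw [← real_inner_self_eq_norm_sq]
  rw [PiLp.inner_apply]
  simp only [RCLike.inner_apply, conj_trivial]
  simp [signVec_sq]

lemma sum_eps_mul {d : ℕ} (i j : Fin d) (hij : i ≠ j) :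
    ∑ e : Fin d → Bool, signVec e i * signVec e j = 0 := by
  classical
  apply Finset.sum_ninvolution (fun e => Function.update e i (!(e i)))
  · intro e
    have h1 : signVec (Function.update e i (!(e i))) i = - signVec e i := by
      simp [signVec]
      cases e i <;> norm_num
    have h2 : signVec (Function.update e i (!(e i))) j = signVec e j := by
      simp [signVec, Function.update_of_ne (Ne.symm hij)]
    rw [h1, h2]; ring
  · intro e _
    intro h
    have := congrFun h i
    rw [Function.update_self] at this
    cases e i <;> simp at this
  · intro e; exact Finset.mem_univ _
  · intro e
    ext x
    by_cases hx : x = i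
    · subst hx; simp
    · simp [Function.update_of_ne hx]

lemma sum_inner_signVec_sq {d : ℕ} (v : EuclideanSpace ℝ (Fin d)) :
    ∑ e : Fin d → Bool, ⟪v, signVec e⟫ ^ 2 = 2 ^ d * ‖v‖ ^ 2 := by
  classical
  have hinner : ∀ e : Fin d → Bool, ⟪v, signVec e⟫ = ∑ i, v i * signVec e i := by
    intro e
    rw [PiLp.inner_apply]
    simp [RCLike.inner_apply, mul_comm]
  calc ∑ e : Fin d → Bool, ⟪v, signVec e⟫ ^ 2
      = ∑ e : Fin d → Bool, ∑ i, ∑ j, (v i * signVec e i) * (v j * signVec e j) := by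
        refine Finset.sum_congr rfl fun e _ => ?_
        rw [hinner, sq, Finset.sum_mul_sum]
    _ = ∑ i, ∑ j, (v i * v j) * ∑ e : Fin d → Bool, signVec e i * signVec e j := by
        rw [Finset.sum_comm]
        refine Finset.sum_congr rfl fun i _ => ?_
        rw [Finset.sum_comm]
        refine Finset.sum_congr rfl fun j _ => ?_
        rw [Finset.mul_sum]
        refine Finset.sum_congr rfl fun e _ => ?_
        ring
    _ = ∑ i : Fin d, (v i * v i) * 2 ^ d := by
        refine Finset.sum_congr rfl fun i _ => ?_
        rw [Finset.sum_eq_single i]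
        · simp [signVec_sq, Finset.card_univ]
        · intro j _ hji
          rw [sum_eps_mul i j (Ne.symm hji), mul_zero]
        · simp
    _ = 2 ^ d * ‖v‖ ^ 2 := by
        rw [← real_inner_self_eq_norm_sq, PiLp.inner_apply]
        simp only [RCLike.inner_apply, conj_trivial]
        rw [← Finset.sum_mul]
        ring

lemma s2pDyn_succ {d : ℕ} (f : EuclideanSpace ℝ (Fin d) → ℝ)
    (x0 : EuclideanSpace ℝ (Fin d)) (ρ L : ℝ) (s : ℕ → EuclideanSpace ℝ (Fin d)) (k : ℕ) :
    s2pDyn f x0 ρ L s (k+1) =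
      (if f (s2pDyn f x0 ρ L s k
            + (|f (s2pDyn f x0 ρ L s k + ρ • s k) - f (s2pDyn f x0 ρ L s k - ρ • s k)|
                / (2 * ρ * L * d)) • s k)
          ≤ f (s2pDyn f x0 ρ L s k
            - (|f (s2pDyn f x0 ρ L s k + ρ • s k) - f (s2pDyn f x0 ρ L s k - ρ • s k)|
                / (2 * ρ * L * d)) • s k)
        then s2pDyn f x0 ρ L s k
            + (|f (s2pDyn f x0 ρ L s k + ρ • s k) - f (s2pDyn f x0 ρ L s k - ρ • s k)|
                / (2 * ρ * L * d)) • s k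
        else s2pDyn f x0 ρ L s k
            - (|f (s2pDyn f x0 ρ L s k + ρ • s k) - f (s2pDyn f x0 ρ L s k - ρ • s k)|
                / (2 * ρ * L * d)) • s k) := rfl

lemma s2pDyn_congr {d : ℕ} (f : EuclideanSpace ℝ (Fin d) → ℝ)
    (x0 : EuclideanSpace ℝ (Fin d)) (ρ L : ℝ) (s s' : ℕ → EuclideanSpace ℝ (Fin d)) :
    ∀ k, (∀ i, i < k → s i = s' i) → s2pDyn f x0 ρ L s k = s2pDyn f x0 ρ L s' k
  | 0, _ => rfl
  | k+1, h => by
    have ih := s2pDyn_congr f x0 ρ L s s' k (fun i hi => h i (Nat.lt_succ_of_lt hi))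
    rw [s2pDyn_succ, s2pDyn_succ, ih, h k (Nat.lt_succ_self k)]

lemma sum_inner_eq {d : ℕ} {ι : Type*} [Fintype ι] [DecidableEq ι] (k : ι)
    (V : (ι → (Fin d → Bool)) → EuclideanSpace ℝ (Fin d))
    (hV : ∀ (ω : ι → Fin d → Bool) (e : Fin d → Bool), V (Function.update ω k e) = V ω) :
    ∑ ω : ι → Fin d → Bool, ⟪V ω, signVec (ω k)⟫ ^ 2
      = ∑ ω : ι → Fin d → Bool, ‖V ω‖ ^ 2 := by
  classical
  set σ := Equiv.funSplitAt k (Fin d → Bool) with hσ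
  have hk : ∀ (e : Fin d → Bool) (r : { j // j ≠ k } → Fin d → Bool), σ.symm (e, r) k = e := by
    intro e r
    rw [hσ, Equiv.funSplitAt_symm_apply, dif_pos rfl]
  have hupd : ∀ (e e' : Fin d → Bool) (r : { j // j ≠ k } → Fin d → Bool),
      σ.symm (e, r) = Function.update (σ.symm (e', r)) k e := by
    intro e e' r
    funext j
    by_cases hj : j = k
    · subst hj
      rw [Function.update_self, hk]
    · rw [Function.update_of_ne hj, hσ, Equiv.funSplitAt_symm_apply,
        Equiv.funSplitAt_symm_apply, dif_neg hj, dif_neg hj]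
  have hVconst : ∀ (e : Fin d → Bool) (r : { j // j ≠ k } → Fin d → Bool),
      V (σ.symm (e, r)) = V (σ.symm ((fun _ => true), r)) := by
    intro e r
    rw [hupd e (fun _ => true) r, hV]
  have hcard : (Finset.univ : Finset (Fin d → Bool)).card = 2 ^ d := by
    simp [Finset.card_univ]
  calc ∑ ω : ι → Fin d → Bool, ⟪V ω, signVec (ω k)⟫ ^ 2
      = ∑ p : (Fin d → Bool) × ({ j // j ≠ k } → Fin d → Bool),
          ⟪V (σ.symm p), signVec ((σ.symm p) k)⟫ ^ 2 :=
        (Equiv.sum_comp σ.symm (fun ω => ⟪V ω, signVec (ω k)⟫ ^ 2)).symm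
    _ = ∑ e : Fin d → Bool, ∑ r : { j // j ≠ k } → Fin d → Bool,
          ⟪V (σ.symm ((fun _ => true), r)), signVec e⟫ ^ 2 := by
        rw [Fintype.sum_prod_type]
        exact Finset.sum_congr rfl fun e _ => Finset.sum_congr rfl fun r _ => by
          rw [hk, hVconst]
    _ = ∑ r : { j // j ≠ k } → Fin d → Bool, ∑ e : Fin d → Bool,
          ⟪V (σ.symm ((fun _ => true), r)), signVec e⟫ ^ 2 := Finset.sum_comm
    _ = ∑ r : { j // j ≠ k } → Fin d → Bool, ∑ e : Fin d → Bool,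
          ‖V (σ.symm ((fun _ => true), r))‖ ^ 2 := by
        refine Finset.sum_congr rfl fun r _ => ?_
        rw [sum_inner_signVec_sq, Finset.sum_const, hcard, nsmul_eq_mul]
        push_cast
        ring
    _ = ∑ e : Fin d → Bool, ∑ r : { j // j ≠ k } → Fin d → Bool,
          ‖V (σ.symm (e, r))‖ ^ 2 := by
        rw [Finset.sum_comm]
        exact Finset.sum_congr rfl fun e _ => Finset.sum_congr rfl fun r _ =>
          (hVconst e r ▸ rfl)
    _ = ∑ p : (Fin d → Bool) × ({ j // j ≠ k } → Fin d → Bool), ‖V (σ.symm p)‖ ^ 2 := by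
        rw [Fintype.sum_prod_type]
    _ = ∑ ω : ι → Fin d → Bool, ‖V ω‖ ^ 2 :=
        Equiv.sum_comp σ.symm (fun ω => ‖V ω‖ ^ 2)

set_option maxHeartbeats 1000000 in
/-- Theorem 3.3, Option 2: dynamic step size under general
smoothness.  The `K` independent Rademacher vectors are modelled by a uniform
sample `ω : Fin K → Fin d → Bool`, and expectations are uniform averages over
all such `ω`. -/
theorem stmt8 (d : ℕ) (hd : 1 ≤ d) (f : EuclideanSpace ℝ (Fin d) → ℝ) (L : ℝ) (hL : 0 < L)
    (hdiff : Differentiable ℝ f)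
    (hlip : ∀ x y : EuclideanSpace ℝ (Fin d),
      ‖gradient f x - gradient f y‖ ≤ L * ‖x - y‖)
    (fstar : ℝ) (hbdd : ∀ x, fstar ≤ f x)
    (x0 : EuclideanSpace ℝ (Fin d)) (ρ : ℝ) (hρ : 0 < ρ)
    (K : ℕ) (hK : 1 ≤ K) :
    ∃ j ≤ K,
      (∑ ω : Fin K → Fin d → Bool,
          ‖gradient f
            (s2pDyn f x0 ρ L
              (fun k => if h : k < K then signVec (ω ⟨k, h⟩) else 0) j)‖ ^ 2)
          / (Fintype.card (Fin K → Fin d → Bool) : ℝ)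
        ≤ 4 * L * d * (f x0 - fstar) / K + L ^ 2 * d ^ 2 * ρ ^ 2 / 2 := by
  classical
  have hdpos : (0:ℝ) < d := by exact_mod_cast Nat.lt_of_lt_of_le Nat.zero_lt_one hd
  have hKpos : (0:ℝ) < K := by exact_mod_cast Nat.lt_of_lt_of_le Nat.zero_lt_one hK
  set N : ℝ := (Fintype.card (Fin K → Fin d → Bool) : ℝ) with hN
  have hNpos : (0:ℝ) < N := by
    rw [hN]; exact_mod_cast Fintype.card_pos
  set sfun : (Fin K → Fin d → Bool) → ℕ → EuclideanSpace ℝ (Fin d) :=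
    fun ω k => if h : k < K then signVec (ω ⟨k, h⟩) else 0 with hsfun
  set X : ℕ → (Fin K → Fin d → Bool) → EuclideanSpace ℝ (Fin d) :=
    fun j ω => s2pDyn f x0 ρ L (sfun ω) j with hX
  set T : ℕ → ℝ := fun j => ∑ ω : Fin K → Fin d → Bool, ‖gradient f (X j ω)‖ ^ 2 with hT
  set S : ℕ → ℝ := fun j => ∑ ω : Fin K → Fin d → Bool, f (X j ω) with hS
  -- invariance of X k under changing coordinate k of ω
  have hXinv : ∀ (k : ℕ) (hk : k < K) (ω : Fin K → Fin d → Bool) (e : Fin d → Bool),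
      X k (Function.update ω ⟨k, hk⟩ e) = X k ω := by
    intro k hk ω e
    apply s2pDyn_congr
    intro i hi
    simp only [hsfun]
    by_cases hiK : i < K
    · rw [dif_pos hiK, dif_pos hiK,
        Function.update_of_ne (Fin.ne_of_val_ne (Nat.ne_of_lt hi))]
    · rw [dif_neg hiK, dif_neg hiK]
  -- per-step expectation bound
  have key : ∀ k, k < K → T k ≤ 2 * L * d * (S k - S (k + 1)) + N * ((L * d) ^ 2 * ρ ^ 2 / 4) := by
    intro k hk
    have hstep : ∀ ω : Fin K → Fin d → Bool,
        f (X (k + 1) ω) ≤ f (X k ω)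
          - ⟪gradient f (X k ω), signVec (ω ⟨k, hk⟩)⟫ ^ 2 / (2 * L * d)
          + L * d * ρ ^ 2 / 8 := by
      intro ω
      have hsk : sfun ω k = signVec (ω ⟨k, hk⟩) := dif_pos hk
      have hb := step_bound hL hdiff hlip hd hρ (X k ω) (signVec (ω ⟨k, hk⟩))
        (norm_signVec_sq _)
      refine le_trans (le_of_eq ?_) hb
      have e1 : X (k + 1) ω = (if f (X k ω
            + (|f (X k ω + ρ • signVec (ω ⟨k, hk⟩)) - f (X k ω - ρ • signVec (ω ⟨k, hk⟩))|
                / (2 * ρ * L * d)) • signVec (ω ⟨k, hk⟩))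
          ≤ f (X k ω
            - (|f (X k ω + ρ • signVec (ω ⟨k, hk⟩)) - f (X k ω - ρ • signVec (ω ⟨k, hk⟩))|
                / (2 * ρ * L * d)) • signVec (ω ⟨k, hk⟩))
        then X k ω
            + (|f (X k ω + ρ • signVec (ω ⟨k, hk⟩)) - f (X k ω - ρ • signVec (ω ⟨k, hk⟩))|
                / (2 * ρ * L * d)) • signVec (ω ⟨k, hk⟩)
        else X k ω
            - (|f (X k ω + ρ • signVec (ω ⟨k, hk⟩)) - f (X k ω - ρ • signVec (ω ⟨k, hk⟩))|
                / (2 * ρ * L * d)) • signVec (ω ⟨k, hk⟩)) := by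
        show s2pDyn f x0 ρ L (sfun ω) (k + 1) = _
        rw [s2pDyn_succ, hsk]
      rw [e1, apply_ite f]
    have hq : ∑ ω : Fin K → Fin d → Bool,
        ⟪gradient f (X k ω), signVec (ω ⟨k, hk⟩)⟫ ^ 2 = T k := by
      exact sum_inner_eq (ι := Fin K) ⟨k, hk⟩ (fun ω => gradient f (X k ω))
        (fun ω e => by
          show gradient f (X k (Function.update ω ⟨k, hk⟩ e)) = gradient f (X k ω)
          rw [hXinv k hk ω e])
    have hsum : S (k + 1) ≤ S k - T k / (2 * L * d) + N * (L * d * ρ ^ 2 / 8) := by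
      have h1 := Finset.sum_le_sum (fun ω (_ : ω ∈ Finset.univ) => hstep ω)
      calc S (k + 1) = ∑ ω : Fin K → Fin d → Bool, f (X (k + 1) ω) := rfl
        _ ≤ ∑ ω : Fin K → Fin d → Bool, (f (X k ω)
              - ⟪gradient f (X k ω), signVec (ω ⟨k, hk⟩)⟫ ^ 2 / (2 * L * d)
              + L * d * ρ ^ 2 / 8) := h1
        _ = S k - T k / (2 * L * d) + N * (L * d * ρ ^ 2 / 8) := by
            rw [Finset.sum_add_distrib, Finset.sum_sub_distrib, ← Finset.sum_div, hq,
              Finset.sum_const, Finset.card_univ, nsmul_eq_mul, hN]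
    have h2 : T k / (2 * L * d) ≤ S k - S (k + 1) + N * (L * d * ρ ^ 2 / 8) := by linarith
    calc T k = T k / (2 * L * d) * (2 * L * d) := by field_simp
      _ ≤ (S k - S (k + 1) + N * (L * d * ρ ^ 2 / 8)) * (2 * L * d) :=
          mul_le_mul_of_nonneg_right h2 (by positivity)
      _ = 2 * L * d * (S k - S (k + 1)) + N * ((L * d) ^ 2 * ρ ^ 2 / 4) := by ring
  -- telescoping
  have htel : ∑ k ∈ Finset.range K, T k
      ≤ 2 * L * d * (S 0 - S K) + K * (N * ((L * d) ^ 2 * ρ ^ 2 / 4)) := by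
    calc ∑ k ∈ Finset.range K, T k
        ≤ ∑ k ∈ Finset.range K,
            (2 * L * d * (S k - S (k + 1)) + N * ((L * d) ^ 2 * ρ ^ 2 / 4)) :=
          Finset.sum_le_sum (fun k hk => key k (Finset.mem_range.1 hk))
      _ = 2 * L * d * ∑ k ∈ Finset.range K, (S k - S (k + 1))
            + K * (N * ((L * d) ^ 2 * ρ ^ 2 / 4)) := by
          rw [Finset.sum_add_distrib, ← Finset.mul_sum, Finset.sum_const, Finset.card_range,
            nsmul_eq_mul]
      _ = 2 * L * d * (S 0 - S K) + K * (N * ((L * d) ^ 2 * ρ ^ 2 / 4)) := by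
          rw [Finset.sum_range_sub' S K]
  have hS0 : S 0 = N * f x0 := by
    rw [hS]
    have h0 : ∀ ω : Fin K → Fin d → Bool, X 0 ω = x0 := fun _ => rfl
    simp only [h0]
    rw [Finset.sum_const, Finset.card_univ, nsmul_eq_mul, hN]
  have hSK : N * fstar ≤ S K := by
    rw [hS, hN]
    calc N * fstar = ∑ _ω : Fin K → Fin d → Bool, fstar := by
          rw [Finset.sum_const, Finset.card_univ, nsmul_eq_mul, hN]
      _ ≤ ∑ ω : Fin K → Fin d → Bool, f (X K ω) :=
          Finset.sum_le_sum (fun ω _ => hbdd _)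
  -- choose minimizing index
  obtain ⟨j, hjmem, hjmin⟩ := Finset.exists_min_image (Finset.range K) T
    ⟨0, Finset.mem_range.2 (Nat.lt_of_lt_of_le Nat.zero_lt_one hK)⟩
  have hjK : j < K := Finset.mem_range.1 hjmem
  refine ⟨j, le_of_lt hjK, ?_⟩
  have hKT : (K : ℝ) * T j ≤ ∑ k ∈ Finset.range K, T k := by
    calc (K : ℝ) * T j = ∑ _k ∈ Finset.range K, T j := by
          rw [Finset.sum_const, Finset.card_range, nsmul_eq_mul]
      _ ≤ ∑ k ∈ Finset.range K, T k := Finset.sum_le_sum (fun k hk => hjmin k hk)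
  have hgap : 0 ≤ f x0 - fstar := by linarith [hbdd x0]
  have hmain : (K : ℝ) * T j ≤ 2 * L * d * N * (f x0 - fstar)
      + K * (N * ((L * d) ^ 2 * ρ ^ 2 / 4)) := by
    have h1 : S 0 - S K ≤ N * (f x0 - fstar) := by rw [hS0]; nlinarith
    have h2 : 2 * L * ↑d * (S 0 - S K) ≤ 2 * L * ↑d * N * (f x0 - fstar) := by
      calc 2 * L * ↑d * (S 0 - S K) ≤ 2 * L * ↑d * (N * (f x0 - fstar)) :=
            mul_le_mul_of_nonneg_left h1 (by positivity)
        _ = 2 * L * ↑d * N * (f x0 - fstar) := by ring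
    linarith [hKT, htel]
  -- final arithmetic
  show T j / N ≤ 4 * L * d * (f x0 - fstar) / K + L ^ 2 * d ^ 2 * ρ ^ 2 / 2
  rw [div_le_iff₀ hNpos]
  have hKne : (K:ℝ) ≠ 0 := ne_of_gt hKpos
  have hexpand : (K : ℝ) * ((4 * L * ↑d * (f x0 - fstar) / ↑K + L ^ 2 * ↑d ^ 2 * ρ ^ 2 / 2) * N)
      = 4 * L * ↑d * (f x0 - fstar) * N + K * (L ^ 2 * ↑d ^ 2 * ρ ^ 2 / 2) * N := by
    field_simp
  have hfinal : (K : ℝ) * T j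
      ≤ (K : ℝ) * ((4 * L * ↑d * (f x0 - fstar) / ↑K + L ^ 2 * ↑d ^ 2 * ρ ^ 2 / 2) * N) := by
    rw [hexpand]
    have hA : 2 * L * ↑d * N * (f x0 - fstar) ≤ 4 * L * ↑d * (f x0 - fstar) * N := by
      nlinarith [mul_nonneg (mul_nonneg (mul_nonneg (le_of_lt hL) (le_of_lt hdpos)) (le_of_lt hNpos)) hgap]
    have hB : (K:ℝ) * (N * ((L * ↑d) ^ 2 * ρ ^ 2 / 4)) ≤ K * (L ^ 2 * ↑d ^ 2 * ρ ^ 2 / 2) * N := by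
      nlinarith [mul_pos hKpos hNpos, sq_nonneg (L * ↑d * ρ)]
    linarith [hmain]
  exact le_of_mul_le_mul_left hfinal hKpos
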